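/- arXiv:cond-mat/0606038 — 6 statements merged into one kernel-verified Lean document; each statement's English description precedes it below -/
import Mathlib

section
/- Let 1 ≤ q < 2, 0 < α < 2, and let X₁, …, X_m be q-independent random variables, each having a (q,α)-stable distribution, say F_q[X_j](ξ) = e_q^{−β_j |ξ|^α} with β_j > 0. Then for any nonzero real constants a₁, …, a_m the linear combination Σ_{j=1}^m a_j X_j again has a (q,α)-stable distribution; in fact F_q[Σ_j a_j X_j](ξ) = e_q^{−β|ξ|^α} with β = Σ_{j=1}^m β_j |a_j|^{α(2−q)} > 0. -/
open Complex MeasureTheory Filter Topology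

noncomputable section

/-- The complex `q`-exponential: principal branch of `(1+(1-q)z)^{1/(1-q)}`. -/
def qExp (q : ℝ) (z : ℂ) : ℂ := (1 + (1 - (q : ℂ)) * z) ^ ((1 : ℂ) / (1 - (q : ℂ)))

/-- The real `q`-exponential `e_q^x = [1+(1-q)x]₊^{1/(1-q)}`. -/
def qExpR (q x : ℝ) : ℝ := (max (1 + (1 - q) * x) 0) ^ (1 / (1 - q))

/-- The complex `q`-product (principal branches). -/
def qProdC (q : ℝ) (z w : ℂ) : ℂ :=
  (z ^ (1 - (q : ℂ)) + w ^ (1 - (q : ℂ)) - 1) ^ ((1 : ℂ) / (1 - (q : ℂ)))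

/-- The `q`-Fourier transform `F_q[f](ξ) = ∫ f(x) e_q^{i x ξ f(x)^{q-1}} dx`. -/
def qFourier (q : ℝ) (f : ℝ → ℝ) (ξ : ℝ) : ℂ :=
  ∫ x : ℝ, (f x : ℂ) * qExp q (Complex.I * (x : ℂ) * (ξ : ℂ) * ((f x ^ (q - 1) : ℝ) : ℂ))

/-- `A_n(q) = ∏_{k=0}^n (q - k(1-q))`. -/
def qA (q : ℝ) (n : ℕ) : ℝ := ∏ k ∈ Finset.range (n + 1), (q - (k : ℝ) * (1 - q))

/-- The `q`-cosine, defined for all real `x` by its power series. -/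
def qCos (q x : ℝ) : ℝ :=
  1 - x ^ 2 * ∑' n : ℕ, (-1 : ℝ) ^ n * qA q (2 * n) / (Nat.factorial (2 * n + 2) : ℝ) * x ^ (2 * n)

/-- The `q`-sine, defined for all real `x` by its power series. -/
def qSin (q x : ℝ) : ℝ :=
  x - x ^ 2 * ∑' n : ℕ, (-1 : ℝ) ^ n * qA q (2 * n + 1) / (Nat.factorial (2 * n + 3) : ℝ) * x ^ (2 * n + 1)

/-- `Ψ_q(x) = cos_q(2x) - 1`. -/
def qPsi (q x : ℝ) : ℝ := qCos q (2 * x) - 1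

/-- The complex-valued `q`-sine `sin_q(x) = (e_q^{ix} - e_q^{-ix})/(2i)`. -/
def qSinC (q : ℝ) (x : ℝ) : ℂ :=
  (qExp q (Complex.I * (x : ℂ)) - qExp q (-(Complex.I * (x : ℂ)))) / (2 * Complex.I)

/-- The constant `μ_{q,α}` (with tail constant `C`). -/
def qMu (q α C : ℝ) : ℝ :=
  (2 ^ (2 - α) * (1 + α * (q - 1)) * C / (2 - q)) *
    ∫ y in Set.Ioi (0 : ℝ), (-qPsi q y) / y ^ (α + 1)

/-- The `n`-fold `q`-product `g 0 ⊗_q g 1 ⊗_q ⋯ ⊗_q g (n-1)`. -/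
def qProdFold (q : ℝ) (g : ℕ → ℂ) : ℕ → ℂ
  | 0 => 1
  | 1 => g 0
  | (n + 2) => qProdC q (qProdFold q g (n + 1)) (g (n + 1))

lemma myQExp_one (z : ℂ) : qExp 1 z = 1 := by
  simp [qExp]

lemma myQExp_ofReal {q : ℝ} (hq : 1 < q) {x : ℝ} (hx : x ≤ 0) :
    qExp q (x : ℂ) = (((1 + (1 - q) * x) ^ (1 / (1 - q)) : ℝ) : ℂ) := by
  have h0 : (0:ℝ) ≤ 1 + (1 - q) * x := by nlinarith
  rw [qExp, Complex.ofReal_cpow h0]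
  push_cast
  ring_nf

lemma myQProdC_qExp {q : ℝ} (hq1 : 1 ≤ q) (hq2 : q < 2) {x y : ℝ} (hx : x ≤ 0) (hy : y ≤ 0) :
    qProdC q (qExp q (x : ℂ)) (qExp q (y : ℂ)) = qExp q ((x + y : ℝ) : ℂ) := by
  rcases eq_or_lt_of_le hq1 with h1 | h1
  · subst h1; simp [qProdC, myQExp_one]
  · have hs : (1:ℝ) - q ≠ 0 := by linarith
    have h0x : (0:ℝ) ≤ 1 + (1 - q) * x := by nlinarith
    have h0y : (0:ℝ) ≤ 1 + (1 - q) * y := by nlinarith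
    have hpow : ∀ z : ℝ, z ≤ 0 →
        (qExp q (z : ℂ)) ^ (1 - (q:ℂ)) = ((1 + (1 - q) * z : ℝ) : ℂ) := by
      intro z hz
      have h0 : (0:ℝ) ≤ 1 + (1 - q) * z := by nlinarith
      rw [myQExp_ofReal h1 hz]
      have : ((1 - q : ℝ) : ℂ) = 1 - (q : ℂ) := by push_cast; ring
      rw [← this, ← Complex.ofReal_cpow (Real.rpow_nonneg h0 _) (1 - q),
        ← Real.rpow_mul h0]
      rw [one_div, inv_mul_cancel₀ hs, Real.rpow_one]
    rw [qProdC, hpow x hx, hpow y hy]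
    have hxy : (0:ℝ) ≤ 1 + (1 - q) * (x + y) := by nlinarith
    have : ((1 + (1-q)*x : ℝ) : ℂ) + ((1 + (1-q)*y : ℝ) : ℂ) - 1
        = ((1 + (1-q)*(x+y) : ℝ) : ℂ) := by push_cast; ring
    rw [this, myQExp_ofReal h1 (by linarith : x + y ≤ 0),
      Complex.ofReal_cpow hxy]
    push_cast; ring_nf

lemma myQFourier_scaled {q : ℝ} (hq : 1 ≤ q) (f : ℝ → ℝ) (hf : ∀ x, 0 ≤ f x)
    {a : ℝ} (ha : a ≠ 0) (ξ : ℝ) :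
    qFourier q (fun x => (1 / |a|) * f (x / a)) ξ
      = qFourier q f (a * |a| ^ (1 - q) * ξ) := by
  have ha' : (0:ℝ) < |a| := abs_pos.2 ha
  set ξ' : ℝ := a * |a| ^ (1 - q) * ξ with hξ'
  set h : ℝ → ℂ := fun y => (f y : ℂ) *
    qExp q (Complex.I * (y : ℂ) * (ξ' : ℂ) * ((f y ^ (q - 1) : ℝ) : ℂ)) with hh
  have key : (fun x => (((1 / |a|) * f (x / a) : ℝ) : ℂ) *
      qExp q (Complex.I * (x : ℂ) * (ξ : ℂ) * ((((1 / |a|) * f (x / a)) ^ (q - 1) : ℝ) : ℂ)))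
      = fun x => (1 / |a| : ℝ) • h (x / a) := by
    funext x
    have hc : ((1 / |a|) * f (x / a)) ^ (q - 1) = |a| ^ (1 - q) * f (x / a) ^ (q - 1) := by
      rw [Real.mul_rpow (by positivity) (hf _), one_div, Real.inv_rpow ha'.le,
        ← Real.rpow_neg ha'.le]
      ring_nf
    have harg : Complex.I * (x : ℂ) * (ξ : ℂ) * ((((1 / |a|) * f (x / a)) ^ (q - 1) : ℝ) : ℂ)
        = Complex.I * ((x / a : ℝ) : ℂ) * (ξ' : ℂ) * ((f (x / a) ^ (q - 1) : ℝ) : ℂ) := by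
      rw [hc, hξ']
      have haC : (a:ℂ) ≠ 0 := by exact_mod_cast ha
      push_cast
      field_simp [haC]
    rw [harg, hh]
    simp only [Complex.real_smul]
    push_cast
    ring
  rw [qFourier]
  simp only [key]
  rw [integral_smul, MeasureTheory.Measure.integral_comp_div h a, smul_smul]
  rw [one_div, inv_mul_cancel₀ ha'.ne', one_smul]
  rfl

lemma myQProdFold_two (q : ℝ) (g : ℕ → ℂ) (n : ℕ) :
    qProdFold q g (n + 2) = qProdC q (qProdFold q g (n + 1)) (g (n + 1)) := rfl


/-- Linear combinations of `q`-independent `(q,α)`-stable random variables are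
`(q,α)`-stable, with `β = Σ β_j |a_j|^{α(2-q)}`. -/
theorem qStable_linear_combination (q α : ℝ) (hq1 : 1 ≤ q) (hq2 : q < 2)
    (hα1 : 0 < α) (hα2 : α < 2) (m : ℕ) (hm : 1 ≤ m)
    (f : ℕ → ℝ → ℝ) (β : ℕ → ℝ) (a : ℕ → ℝ)
    (hf_nn : ∀ j x, 0 ≤ f j x) (hf_int : ∀ j, Integrable (f j))
    (hf_one : ∀ j, ∫ x : ℝ, f j x = 1)
    (hβ : ∀ j, j < m → 0 < β j) (ha : ∀ j, j < m → a j ≠ 0)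
    (hstab : ∀ j, j < m → ∀ ξ : ℝ,
      qFourier q (f j) ξ = qExp q (((-(β j * |ξ| ^ α)) : ℝ) : ℂ))
    (p : ℕ → ℝ → ℝ)
    (hp_nn : ∀ k x, 0 ≤ p k x) (hp_int : ∀ k, 1 ≤ k → k ≤ m → Integrable (p k))
    (hp1 : p 1 = fun x => (1 / |a 0|) * f 0 (x / a 0))
    (hqind : ∀ k, 2 ≤ k → k ≤ m → ∀ ξ : ℝ,
      qFourier q (p k) ξ =
        qProdFold q (fun j => qFourier q (fun x => (1 / |a j|) * f j (x / a j)) ξ) k) :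
    0 < ∑ j ∈ Finset.range m, β j * |a j| ^ (α * (2 - q)) ∧
    ∀ ξ : ℝ, qFourier q (p m) ξ =
      qExp q (((-((∑ j ∈ Finset.range m, β j * |a j| ^ (α * (2 - q))) * |ξ| ^ α)) : ℝ) : ℂ) := by
  have habs : ∀ j, j < m → (0:ℝ) < |a j| := fun j hj => abs_pos.2 (ha j hj)
  have hcpos : ∀ j, j < m → 0 < β j * |a j| ^ (α * (2 - q)) := fun j hj =>
    mul_pos (hβ j hj) (Real.rpow_pos_of_pos (habs j hj) _)
  refine ⟨Finset.sum_pos (fun j hj => hcpos j (Finset.mem_range.1 hj))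
      ⟨0, Finset.mem_range.2 (by omega)⟩, ?_⟩
  intro ξ
  have htnn : (0:ℝ) ≤ |ξ| ^ α := Real.rpow_nonneg (abs_nonneg _) _
  have claim1 : ∀ j, j < m →
      qFourier q (fun x => (1 / |a j|) * f j (x / a j)) ξ
        = qExp q ((-(β j * |a j| ^ (α * (2 - q)) * |ξ| ^ α) : ℝ) : ℂ) := by
    intro j hj
    rw [myQFourier_scaled hq1 (f j) (hf_nn j) (ha j hj) ξ, hstab j hj]
    congr 2
    have e1 : |a j| * |a j| ^ (1 - q) = |a j| ^ (2 - q) := by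
      rw [show (2 - q : ℝ) = 1 + (1 - q) by ring, Real.rpow_add (habs j hj), Real.rpow_one]
    have e2 : |a j * |a j| ^ (1 - q) * ξ| = |a j| ^ (2 - q) * |ξ| := by
      rw [abs_mul, abs_mul, _root_.abs_of_nonneg (Real.rpow_nonneg (abs_nonneg _) _), e1]
    rw [e2, Real.mul_rpow (Real.rpow_nonneg (abs_nonneg _) _) (abs_nonneg _),
      ← Real.rpow_mul (abs_nonneg _), mul_comm (2 - q) α]
    ring
  have claim2 : ∀ k, 1 ≤ k → k ≤ m →
      qProdFold q (fun j => qFourier q (fun x => (1 / |a j|) * f j (x / a j)) ξ) k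
        = qExp q (((-((∑ j ∈ Finset.range k, β j * |a j| ^ (α * (2 - q))) * |ξ| ^ α)) : ℝ) : ℂ) := by
    intro k hk
    induction k, hk using Nat.le_induction with
    | base =>
      intro h1m
      show qFourier q (fun x => (1 / |a 0|) * f 0 (x / a 0)) ξ = _
      rw [claim1 0 (by omega)]
      congr 2
      rw [Finset.sum_range_one]
    | succ k hk ih =>
      intro hkm
      obtain ⟨n, rfl⟩ : ∃ n, k = n + 1 := ⟨k - 1, by omega⟩
      rw [show n + 1 + 1 = n + 2 from rfl, myQProdFold_two, ih (by omega),
        claim1 (n + 1) (by omega)]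
      have hS : (0:ℝ) ≤ ∑ j ∈ Finset.range (n + 1), β j * |a j| ^ (α * (2 - q)) :=
        Finset.sum_nonneg fun j hj => by
          have := Finset.mem_range.1 hj
          exact (hcpos j (by omega)).le
      rw [myQProdC_qExp hq1 hq2
        (neg_nonpos.2 (mul_nonneg hS htnn))
        (neg_nonpos.2 (mul_nonneg (hcpos (n + 1) (by omega)).le htnn))]
      congr 2
      conv_rhs => rw [Finset.sum_range_succ]
      ring
  rcases Nat.lt_or_ge m 2 with h2 | h2
  · have hm1 : m = 1 := by omega
    subst hm1
    rw [hp1, claim1 0 (by omega)]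
    congr 2
    rw [Finset.sum_range_one]
  · rw [hqind m h2 le_rfl ξ]
    exact claim2 m hm le_rfl
end
end

section
/- Let q ≠ 1 and let I_q = (−1/|1−q|, 1/|1−q|). For every real x ∈ I_q the q-analogues of Euler's formulas hold: (i) e_q^{ix} = cos_q(x) + i sin_q(x), so that cos_q(x) = 1 − x² Σ_{n=0}^∞ (−1)^n A_{2n}(q) x^{2n}/(2n+2)! is the real part and sin_q(x) = x − x² Σ_{n=0}^∞ (−1)^n A_{2n+1}(q) x^{2n+1}/(2n+3)! is the imaginary part of e_q^{ix}; (ii) cos_q(x) = (e_q^{ix} + e_q^{−ix})/2; (iii) sin_q(x) = (e_q^{ix} − e_q^{−ix})/(2i). -/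
open Complex MeasureTheory Filter Topology

noncomputable section

set_option maxHeartbeats 1000000

open Finset in
private lemma qbinom_hasSum (a : ℂ) (y : ℝ) (hy : |y| < 1) :
    HasSum (fun n : ℕ => ((∏ k ∈ range n, (a - k)) / (Nat.factorial n : ℂ)) * (Complex.I * y) ^ n)
      ((1 + Complex.I * y) ^ a) := by
  set c : ℕ → ℂ := fun n => (∏ k ∈ range n, (a - k)) / (Nat.factorial n : ℂ) with hcdef
  have hc0 : c 0 = 1 := by simp [hcdef]
  have hfac : ∀ n : ℕ, (Nat.factorial n : ℂ) ≠ 0 := fun n =>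
    Nat.cast_ne_zero.mpr (Nat.factorial_ne_zero n)
  have hcs : ∀ n : ℕ, c (n + 1) * ((n : ℂ) + 1) = c n * (a - n) := by
    intro n
    have h1 : (Nat.factorial (n + 1) : ℂ) = ((n : ℂ) + 1) * (Nat.factorial n : ℂ) := by
      push_cast [Nat.factorial_succ]; ring
    rw [hcdef]
    simp only [prod_range_succ, h1]
    rw [div_mul_eq_mul_div, mul_comm ((n:ℂ)+1), mul_div_mul_right _ _ (Nat.cast_add_one_ne_zero n)]
    rw [div_mul_eq_mul_div]
  rcases eq_or_ne y 0 with rfl | hy0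
  · have h1 : (1 + Complex.I * ((0:ℝ):ℂ)) ^ a = 1 := by norm_num
    rw [h1]
    have h2 := hasSum_single (f := fun n => c n * (Complex.I * ((0:ℝ):ℂ)) ^ n) 0
      (fun b hb => by simp [zero_pow hb])
    simpa [hc0] using h2
  -- main case
  set r : ℝ := (1 + |y|) / 2 with hrdef
  have hyr : |y| < r := by rw [hrdef]; linarith
  have hr0 : 0 < r := lt_of_le_of_lt (abs_nonneg y) hyr
  have hr1 : r < 1 := by rw [hrdef]; linarith
  set l : ℝ := (1 + r) / 2 with hldef
  have hrl : r < l := by rw [hldef]; linarith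
  have hl1 : l < 1 := by rw [hldef]; linarith
  -- norm recursion
  have hnc : ∀ n : ℕ, ‖c (n + 1)‖ * ((n : ℝ) + 1) = ‖c n‖ * ‖a - n‖ := by
    intro n
    have h2 : ‖c (n + 1) * ((n : ℂ) + 1)‖ = ‖c n * (a - n)‖ := by rw [hcs n]
    have h3 : ‖((n : ℂ) + 1)‖ = (n : ℝ) + 1 := by
      rw [show ((n : ℂ) + 1) = ((n + 1 : ℕ) : ℂ) by push_cast; ring, Complex.norm_natCast]
      push_cast; ring
    rw [norm_mul, norm_mul, h3] at h2
    exact h2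
  -- summability of the majorant
  set v : ℕ → ℝ := fun n => ((n : ℝ) + 1) * ‖c n‖ * r ^ n with hvdef
  have hvnn : ∀ n, 0 ≤ v n := fun n => by positivity
  have hv : Summable v := by
    apply summable_of_ratio_norm_eventually_le hl1
    set K : ℝ := ‖a‖ with hKdef
    have hK : 0 ≤ K := norm_nonneg a
    set d : ℝ := l - r with hddef
    have hd : 0 < d := by rw [hddef]; linarith
    filter_upwards [eventually_ge_atTop ⌈(2 * K + 1) / d⌉₊] with n hn
    have hn' : (2 * K + 1) / d ≤ (n : ℝ) := by
      exact_mod_cast le_trans (Nat.le_ceil _) (Nat.cast_le.mpr hn)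
    have hn2 : 2 * K + 1 ≤ d * ((n : ℝ) + 1) := by
      rw [div_le_iff₀ hd] at hn'
      nlinarith
    have hAn : ‖a - n‖ ≤ K + n := le_trans (norm_sub_le a n) (by simp [hKdef])
    have key : r * ((n : ℝ) + 2) * ((n : ℝ) + 1 + K) ≤ l * ((n : ℝ) + 1) ^ 2 := by
      have h5 : (0:ℝ) ≤ (n : ℝ) := Nat.cast_nonneg n
      nlinarith [sq_nonneg ((n:ℝ)+1), mul_nonneg hK (Nat.cast_nonneg n)]
    have hnorm : ∀ m : ℕ, ‖v m‖ = v m := fun m => Real.norm_of_nonneg (hvnn m)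
    rw [hnorm, hnorm]
    have hrecv : v (n + 1) * ((n : ℝ) + 1) = ((n : ℝ) + 2) * (‖c n‖ * ‖a - n‖) * r ^ (n + 1) := by
      rw [hvdef]
      push_cast
      calc ((n : ℝ) + 1 + 1) * ‖c (n+1)‖ * r ^ (n+1) * ((n:ℝ)+1)
          = ((n : ℝ) + 2) * (‖c (n+1)‖ * ((n:ℝ)+1)) * r ^ (n+1) := by ring
        _ = ((n : ℝ) + 2) * (‖c n‖ * ‖a - n‖) * r ^ (n + 1) := by rw [hnc n]
    have hpos : (0:ℝ) < (n : ℝ) + 1 := by positivity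
    rw [← mul_le_mul_iff_left₀ hpos, hrecv]
    have : ((n : ℝ) + 2) * (‖c n‖ * ‖a - n‖) * r ^ (n + 1)
        ≤ (l * ((n : ℝ) + 1) ^ 2) * (‖c n‖ * r ^ n) := by
      have h6 : ((n : ℝ) + 2) * ‖a - n‖ * r ≤ l * ((n : ℝ) + 1) ^ 2 := by
        calc ((n : ℝ) + 2) * ‖a - n‖ * r ≤ ((n : ℝ) + 2) * (K + n) * r := by
              apply mul_le_mul_of_nonneg_right _ (le_of_lt hr0)
              exact mul_le_mul_of_nonneg_left hAn (by positivity)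
          _ ≤ l * ((n : ℝ) + 1) ^ 2 := by nlinarith [key]
      calc ((n : ℝ) + 2) * (‖c n‖ * ‖a - n‖) * r ^ (n + 1)
          = (((n : ℝ) + 2) * ‖a - n‖ * r) * (‖c n‖ * r ^ n) := by rw [pow_succ]; ring
        _ ≤ (l * ((n : ℝ) + 1) ^ 2) * (‖c n‖ * r ^ n) := by
            apply mul_le_mul_of_nonneg_right h6 (by positivity)
    refine this.trans_eq ?_
    rw [hvdef]; ring
  -- setup w
  set w : ℂ := Complex.I * (y : ℂ) with hwdef
  have hw : ‖w‖ = |y| := by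
    rw [hwdef, norm_mul, Complex.norm_I, one_mul, Complex.norm_real, Real.norm_eq_abs]
  have hwr : ‖w‖ < r := by rw [hw]; exact hyr
  -- derivative bounds
  set u : ℕ → ℝ := fun n => v n / r with hudef
  have hu : Summable u := hv.div_const r
  have hderb : ∀ (n : ℕ) (z : ℂ), z ∈ Metric.ball (0:ℂ) r →
      ‖c n * ((n : ℂ) * z ^ (n - 1))‖ ≤ u n := by
    intro n z hz
    have hzn : ‖z‖ < r := by simpa [Metric.mem_ball] using hz
    match n with
    | 0 => simp [hudef]; positivity
    | (m + 1) =>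
      have h1 : ‖c (m+1) * (((m+1 : ℕ) : ℂ) * z ^ m)‖ = ‖c (m+1)‖ * (((m:ℝ)+1) * ‖z‖ ^ m) := by
        rw [norm_mul, norm_mul, norm_pow, Complex.norm_natCast]; push_cast; ring
      rw [show (m + 1 - 1) = m from rfl, h1]
      show _ ≤ v (m + 1) / r
      have h2 : ‖z‖ ^ m ≤ r ^ m := pow_le_pow_left₀ (norm_nonneg z) (le_of_lt hzn) m
      have h3 : v (m+1) / r = ((m:ℝ)+2) * ‖c (m+1)‖ * r ^ m := by
        rw [hvdef]
        push_cast
        rw [pow_succ]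
        field_simp
        ring
      rw [h3]
      have := mul_le_mul_of_nonneg_left h2 (mul_nonneg (by positivity : (0:ℝ) ≤ (m:ℝ)+1) (norm_nonneg (c (m+1))))
      nlinarith [norm_nonneg (c (m+1)), pow_nonneg (le_of_lt hr0) m, mul_nonneg (norm_nonneg (c (m+1))) (pow_nonneg (le_of_lt hr0) m)]
  have hg : ∀ (n : ℕ) (z : ℂ), z ∈ Metric.ball (0:ℂ) r →
      HasDerivAt (fun z : ℂ => c n * z ^ n) (c n * ((n : ℂ) * z ^ (n - 1))) z :=
    fun n z _ => (hasDerivAt_pow n z).const_mul (c n)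
  have hball0 : (0:ℂ) ∈ Metric.ball (0:ℂ) r := by simpa [Metric.mem_ball] using hr0
  have hsum0 : Summable (fun n => c n * (0:ℂ) ^ n) := by
    apply summable_of_ne_finset_zero (s := {0})
    intro b hb
    simp only [Finset.mem_singleton] at hb
    simp [zero_pow hb]
  have hSz : ∀ z ∈ Metric.ball (0:ℂ) r, Summable (fun n => c n * z ^ n) := by
    intro z hz
    exact summable_of_summable_hasDerivAt_of_isPreconnected hu Metric.isOpen_ball
      (convex_ball (0:ℂ) r).isPreconnected hg hderb hball0 hsum0 hz
  have key : ∀ z ∈ Metric.ball (0:ℂ) r, HasDerivAt (fun z : ℂ => ∑' n, c n * z ^ n)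
      (∑' n, c n * ((n : ℂ) * z ^ (n - 1))) z := by
    intro z hz
    exact hasDerivAt_tsum_of_isPreconnected hu Metric.isOpen_ball
      (convex_ball (0:ℂ) r).isPreconnected hg hderb hball0 hsum0 hz
  set F : ℂ → ℂ := fun z => ∑' n, c n * z ^ n with hFdef
  set D : ℂ → ℂ := fun z => ∑' n, c n * ((n : ℂ) * z ^ (n - 1)) with hDdef
  -- the functional identity
  have hFid : ∀ z ∈ Metric.ball (0:ℂ) r, (1 + z) * D z = a * F z := by
    intro z hz
    have S1 : Summable (fun n => c n * z ^ n) := hSz z hz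
    have S2 : Summable (fun n => c n * ((n : ℂ) * z ^ (n - 1))) :=
      Summable.of_norm_bounded hu (fun n => hderb n z hz)
    have H2 : HasSum (fun n => c n * ((n : ℂ) * z ^ (n - 1))) (D z) := S2.hasSum
    have H3 : HasSum (fun n : ℕ => c (n + 1) * (((n : ℂ) + 1) * z ^ n)) (D z) := by
      have h4 := (hasSum_nat_add_iff' 1).mpr H2
      simpa using h4
    have heq : (fun n : ℕ => c (n + 1) * (((n : ℂ) + 1) * z ^ n))
        = (fun n : ℕ => (a - n) * (c n * z ^ n)) := by
      funext n
      calc c (n+1) * (((n:ℂ)+1) * z ^ n) = (c (n+1) * ((n:ℂ)+1)) * z ^ n := by ring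
        _ = (c n * (a - n)) * z ^ n := by rw [hcs n]
        _ = (a - n) * (c n * z ^ n) := by ring
    have H3' : HasSum (fun n : ℕ => (a - n) * (c n * z ^ n)) (D z) := heq ▸ H3
    have H4 : HasSum (fun n : ℕ => c n * ((n : ℂ) * z ^ n)) (z * D z) := by
      have h5 := H2.mul_left z
      have heq2 : (fun n : ℕ => z * (c n * ((n : ℂ) * z ^ (n - 1))))
          = (fun n : ℕ => c n * ((n : ℂ) * z ^ n)) := by
        funext n
        match n with
        | 0 => simp
        | (m + 1) =>
          rw [show (m + 1 - 1) = m from rfl, pow_succ]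
          ring
      exact heq2 ▸ h5
    have H5 : HasSum (fun n : ℕ => a * (c n * z ^ n)) (a * F z) := S1.hasSum.mul_left a
    have H6 : HasSum (fun n : ℕ => (a - n) * (c n * z ^ n)) (a * F z - z * D z) := by
      have h7 := H5.sub H4
      have heq3 : (fun n : ℕ => a * (c n * z ^ n) - c n * ((n : ℂ) * z ^ n))
          = (fun n : ℕ => (a - n) * (c n * z ^ n)) := by
        funext n; ring
      exact heq3 ▸ h7
    have h8 : D z = a * F z - z * D z := H3'.unique H6
    linear_combination h8
  -- slit plane facts at real points
  have hre : ∀ t : ℝ, (1 + (t : ℂ) * w).re = 1 := by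
    intro t
    simp [hwdef, Complex.add_re, Complex.mul_re, Complex.mul_im]
  have hne : ∀ t : ℝ, (1 + (t : ℂ) * w) ≠ 0 := by
    intro t h
    have := hre t
    rw [h] at this
    simp at this
  have hslit : ∀ t : ℝ, (1 + (t : ℂ) * w) ∈ Complex.slitPlane := by
    intro t
    rw [Complex.mem_slitPlane_iff]
    left
    rw [hre t]
    norm_num
  -- the auxiliary function is constant on [0,1]
  have hψ : ∀ t : ℝ, t ∈ Set.Icc (0:ℝ) 1 →
      HasDerivAt (fun s : ℝ => (1 + (s : ℂ) * w) ^ (-a) * F ((s : ℂ) * w)) 0 t := by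
    intro t ht
    have htw : (t : ℂ) * w ∈ Metric.ball (0:ℂ) r := by
      rw [Metric.mem_ball, dist_zero_right, norm_mul, Complex.norm_real, Real.norm_eq_abs]
      have h1 : |t| ≤ 1 := abs_le.mpr ⟨by linarith [ht.1], ht.2⟩
      calc |t| * ‖w‖ ≤ 1 * ‖w‖ := mul_le_mul_of_nonneg_right h1 (norm_nonneg w)
        _ = ‖w‖ := one_mul _
        _ < r := hwr
    -- complex derivative of the auxiliary function at the real point t
    have hlinC : HasDerivAt (fun u : ℂ => 1 + u * w) w (t : ℂ) := by
      simpa using ((hasDerivAt_id ((t : ℂ))).mul_const w).const_add 1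
    have hpow : HasDerivAt (fun u : ℂ => (1 + u * w) ^ (-a))
        ((-a) * (1 + (t : ℂ) * w) ^ (-a - 1) * w) (t : ℂ) := hlinC.cpow_const (hslit t)
    have hFd : HasDerivAt (fun u : ℂ => F (u * w)) (D ((t : ℂ) * w) * w) (t : ℂ) := by
      have h2 : HasDerivAt (fun u : ℂ => u * w) w (t : ℂ) := by
        simpa using (hasDerivAt_id ((t : ℂ))).mul_const w
      have h1 : HasDerivAt F (D ((t : ℂ) * w)) ((t : ℂ) * w) := key _ htw
      exact h1.comp (t : ℂ) h2
    have hprod := hpow.mul hFd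
    have hsplit : (1 + (t : ℂ) * w) ^ (-a)
        = (1 + (t : ℂ) * w) ^ (-a - 1) * (1 + (t : ℂ) * w) := by
      conv_lhs => rw [show (-a) = -a - 1 + 1 by ring]
      rw [Complex.cpow_add _ _ (hne t), Complex.cpow_one]
    have hzero : (-a) * (1 + (t : ℂ) * w) ^ (-a - 1) * w * F ((t : ℂ) * w)
        + (1 + (t : ℂ) * w) ^ (-a) * (D ((t : ℂ) * w) * w) = 0 := by
      have h9 := hFid ((t : ℂ) * w) htw
      linear_combination (D ((t : ℂ) * w) * w) * hsplit
        + ((1 + (t : ℂ) * w) ^ (-a - 1) * w) * h9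
    have hC : HasDerivAt (fun u : ℂ => (1 + u * w) ^ (-a) * F (u * w)) 0 (t : ℂ) := by
      rw [← hzero]; exact hprod
    exact hC.comp_ofReal
  have hconst := constant_of_has_deriv_right_zero
    (f := fun s : ℝ => (1 + (s : ℂ) * w) ^ (-a) * F ((s : ℂ) * w))
    (fun t ht => ((hψ t ht).continuousAt).continuousWithinAt)
    (fun t ht => ((hψ t ⟨ht.1, le_of_lt ht.2⟩).hasDerivWithinAt))
    1 (Set.right_mem_Icc.mpr zero_le_one)
  have hF0 : F 0 = 1 := by
    have h2 := hasSum_single (f := fun n => c n * (0:ℂ) ^ n) 0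
      (fun b hb => by simp [zero_pow hb])
    rw [show F 0 = ∑' n, c n * (0:ℂ) ^ n from rfl, h2.tsum_eq]
    simpa using hc0
  have hval0 : ((1 : ℂ) + ((0:ℝ) : ℂ) * w) ^ (-a) * F (((0:ℝ) : ℂ) * w) = 1 := by
    norm_num [hF0, Complex.one_cpow]
  have hconst1 : ((1 : ℂ) + ((1:ℝ) : ℂ) * w) ^ (-a) * F (((1:ℝ) : ℂ) * w) = 1 := by
    exact hconst.trans hval0
  -- conclude
  have hbw : w ∈ Metric.ball (0:ℂ) r := by rwa [Metric.mem_ball, dist_zero_right]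
  have hFw : F w = (1 + w) ^ a := by
    have h1 := hconst1
    rw [Complex.ofReal_one, one_mul] at h1
    have hne1 : (1 + w : ℂ) ≠ 0 := by
      have := hne 1
      rwa [Complex.ofReal_one, one_mul] at this
    have hcne : ((1 + w) ^ a : ℂ) ≠ 0 := by
      rw [Ne, Complex.cpow_eq_zero_iff]
      tauto
    rw [Complex.cpow_neg] at h1
    exact ((inv_mul_eq_one₀ hcne).mp h1).symm
  have := (hSz w hbw).hasSum
  rw [show (fun n => c n * (Complex.I * (y : ℂ)) ^ n) = fun n => c n * w ^ n from rfl]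
  rw [show ((1 : ℂ) + Complex.I * (y : ℂ)) = 1 + w from rfl, ← hFw]
  exact this

/-- `q`-analogues of Euler's formulas on `I_q = (-1/|1-q|, 1/|1-q|)`:
`e_q^{ix} = cos_q x + i sin_q x` (with `cos_q x`, `sin_q x` its real and imaginary
parts), `cos_q x = (e_q^{ix}+e_q^{-ix})/2`, `sin_q x = (e_q^{ix}-e_q^{-ix})/(2i)`. -/
theorem qExp_euler_formulas (q : ℝ) (hq : q ≠ 1) (x : ℝ) (hx : |x| < 1 / |1 - q|) :
    qExp q (Complex.I * (x : ℂ)) = ((qCos q x : ℝ) : ℂ) + Complex.I * ((qSin q x : ℝ) : ℂ) ∧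
    (qExp q (Complex.I * (x : ℂ))).re = qCos q x ∧
    (qExp q (Complex.I * (x : ℂ))).im = qSin q x ∧
    ((qCos q x : ℝ) : ℂ) =
      (qExp q (Complex.I * (x : ℂ)) + qExp q (-(Complex.I * (x : ℂ)))) / 2 ∧
    ((qSin q x : ℝ) : ℂ) =
      (qExp q (Complex.I * (x : ℂ)) - qExp q (-(Complex.I * (x : ℂ)))) / (2 * Complex.I) := by
  have hq1 : (1:ℝ) - q ≠ 0 := sub_ne_zero.mpr (Ne.symm hq)
  have hqC : (1:ℂ) - (q:ℂ) ≠ 0 := by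
    have : ((1 - q : ℝ) : ℂ) ≠ 0 := Complex.ofReal_ne_zero.mpr hq1
    push_cast at this
    exact this
  rcases eq_or_ne x 0 with rfl | hx0
  · have hE1 : qExp q (Complex.I * ((0:ℝ):ℂ)) = 1 := by
      rw [qExp]; norm_num
    have hE1' : qExp q (-(Complex.I * ((0:ℝ):ℂ))) = 1 := by
      rw [qExp]; norm_num
    have hcos : qCos q 0 = 1 := by rw [qCos]; norm_num
    have hsin : qSin q 0 = 0 := by rw [qSin]; norm_num
    rw [hE1, hE1', hcos, hsin]
    norm_num
  -- main case
  set E := qExp q (Complex.I * (x:ℂ)) with hEdef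
  set E' := qExp q (-(Complex.I * (x:ℂ))) with hE'def
  -- conjugation relation
  have hzre : ((1:ℂ) + (1 - (q:ℂ)) * (Complex.I * (x:ℂ))).re = 1 := by
    simp [Complex.add_re, Complex.mul_re, Complex.mul_im]
  have harg : ((1:ℂ) + (1 - (q:ℂ)) * (Complex.I * (x:ℂ))).arg ≠ Real.pi := by
    rw [Ne, Complex.arg_eq_pi_iff]
    rintro ⟨h1, -⟩
    rw [hzre] at h1
    linarith
  have hconj : E' = (starRingEnd ℂ) E := by
    rw [hE'def, hEdef, qExp, qExp]
    have hbase : (1:ℂ) + (1 - (q:ℂ)) * (-(Complex.I * (x:ℂ)))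
        = (starRingEnd ℂ) ((1:ℂ) + (1 - (q:ℂ)) * (Complex.I * (x:ℂ))) := by
      apply Complex.ext <;> simp
    rw [hbase, Complex.conj_cpow _ _ harg]
    congr 1
    simp [map_div₀, map_sub, Complex.conj_ofReal]
  -- binomial series
  set a : ℂ := 1 / (1 - (q:ℂ)) with hadef
  set y : ℝ := (1 - q) * x with hydef
  have hy1 : |y| < 1 := by
    rw [hydef, abs_mul]
    have h1q : 0 < |1 - q| := abs_pos.mpr hq1
    calc |1-q| * |x| < |1-q| * (1/|1-q|) := by exact mul_lt_mul_of_pos_left hx h1q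
      _ = 1 := by field_simp
  have hbin := qbinom_hasSum a y hy1
  have hEeq : ((1:ℂ) + Complex.I * (y:ℂ)) ^ a = E := by
    rw [hEdef, qExp, hadef]
    congr 1
    push_cast [hydef]
    ring
  rw [hEeq] at hbin
  -- real coefficients
  set b : ℕ → ℝ := fun n => (∏ k ∈ Finset.range n, (1 - (k:ℝ) * (1 - q))) / (Nat.factorial n : ℝ)
    with hbdef
  have hterm : ∀ n : ℕ, ((∏ k ∈ Finset.range n, (a - k)) / (Nat.factorial n : ℂ))
      * (Complex.I * (y:ℂ)) ^ n = ((b n : ℝ):ℂ) * (Complex.I * (x:ℂ)) ^ n := by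
    intro n
    have h1 : (Complex.I * (y:ℂ)) ^ n = ((1:ℂ) - q) ^ n * (Complex.I * (x:ℂ)) ^ n := by
      rw [← mul_pow]
      congr 1
      push_cast [hydef]
      ring
    have h2 : (∏ k ∈ Finset.range n, (a - k)) * ((1:ℂ) - q) ^ n
        = ((∏ k ∈ Finset.range n, (1 - (k:ℝ) * (1 - q)) : ℝ) : ℂ) := by
      rw [show ((1:ℂ) - q) ^ n = ∏ _k ∈ Finset.range n, ((1:ℂ) - q) by
        rw [Finset.prod_const, Finset.card_range]]
      rw [← Finset.prod_mul_distrib]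
      push_cast
      apply Finset.prod_congr rfl
      intro k _
      rw [hadef]
      field_simp
    simp only [hbdef]
    rw [h1, Complex.ofReal_div, ← h2]
    push_cast
    ring
  have hbinb : HasSum (fun n => ((b n : ℝ):ℂ) * (Complex.I * (x:ℂ)) ^ n) E :=
    (funext hterm) ▸ hbin
  have hb0 : b 0 = 1 := by simp [hbdef]
  have hb1 : b 1 = 1 := by simp [hbdef]
  have hb2 : ∀ n : ℕ, b (n + 2) = qA q n / (Nat.factorial (n+2) : ℝ) := by
    intro n
    simp only [hbdef, qA]
    congr 1
    conv_lhs => rw [Finset.prod_range_succ']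
    simp only [Nat.cast_zero, zero_mul, sub_zero, mul_one]
    apply Finset.prod_congr rfl
    intro k _
    push_cast
    ring
  -- powers of I*x
  have hIeven : ∀ m : ℕ, (Complex.I * (x:ℂ)) ^ (2*m+2) = (((-1:ℝ)^(m+1) * x^(2*m+2) : ℝ) : ℂ) := by
    intro m
    rw [mul_pow, show 2*m+2 = 2*(m+1) by ring, pow_mul, Complex.I_sq]
    push_cast
    ring
  have hIodd : ∀ m : ℕ, (Complex.I * (x:ℂ)) ^ (2*m+3)
      = (((-1:ℝ)^(m+1) * x^(2*m+3) : ℝ) : ℂ) * Complex.I := by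
    intro m
    rw [mul_pow, show 2*m+3 = 2*(m+1)+1 by ring, pow_succ, pow_mul, Complex.I_sq]
    push_cast
    ring
  have hx2 : -(x^2) ≠ 0 := neg_ne_zero.mpr (pow_ne_zero 2 hx0)
  -- real part
  have Hre : HasSum (fun n => (((b n : ℝ):ℂ) * (Complex.I * (x:ℂ)) ^ n).re) E.re := by
    simpa using Complex.reCLM.hasSum hbinb
  have Hre2 := (hasSum_nat_add_iff'
    (f := fun n => (((b n : ℝ):ℂ) * (Complex.I * (x:ℂ)) ^ n).re) 2).mpr Hre
  have hsum2 : ∑ i ∈ Finset.range 2, (((b i : ℝ):ℂ) * (Complex.I * (x:ℂ)) ^ i).re = 1 := by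
    rw [Finset.sum_range_succ, Finset.sum_range_one]
    simp [hb0, hb1]
  rw [hsum2] at Hre2
  have hinj2 : Function.Injective (fun m : ℕ => 2 * m) := fun m1 m2 h => by
    have h' : 2 * m1 = 2 * m2 := h
    omega
  have Hre3 : HasSum (fun m => (((b (2*m+2) : ℝ):ℂ) * (Complex.I * (x:ℂ)) ^ (2*m+2)).re)
      (E.re - 1) := by
    refine (Function.Injective.hasSum_iff hinj2 ?_).mpr Hre2
    intro n hn
    rcases Nat.even_or_odd n with ⟨m, rfl⟩ | ⟨m, rfl⟩
    · exact absurd ⟨m, show 2 * m = m + m by omega⟩ hn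
    rw [show 2*m+1+2 = 2*m+3 by ring, hIodd m, ← mul_assoc, ← Complex.ofReal_mul,
      Complex.mul_re, Complex.ofReal_re, Complex.ofReal_im, Complex.I_re, Complex.I_im]
    ring
  have Hcos : HasSum (fun m => ((-1:ℝ)^m * qA q (2*m) / (Nat.factorial (2*m+2) : ℝ) * x^(2*m))
      * (-(x^2))) (E.re - 1) := by
    have heq : (fun m : ℕ => (((b (2*m+2) : ℝ):ℂ) * (Complex.I * (x:ℂ)) ^ (2*m+2)).re)
        = (fun m : ℕ => ((-1:ℝ)^m * qA q (2*m) / (Nat.factorial (2*m+2) : ℝ) * x^(2*m))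
          * (-(x^2))) := by
      funext m
      rw [hIeven m, ← Complex.ofReal_mul, Complex.ofReal_re, hb2 (2*m)]
      ring
    exact heq ▸ Hre3
  have Hcos3 : HasSum (fun m => (-1:ℝ)^m * qA q (2*m) / (Nat.factorial (2*m+2) : ℝ) * x^(2*m))
      ((E.re - 1) / (-(x^2))) := by
    have h := Hcos.div_const (-(x^2))
    have heq : (fun m : ℕ => ((-1:ℝ)^m * qA q (2*m) / (Nat.factorial (2*m+2) : ℝ) * x^(2*m))
        * (-(x^2)) / (-(x^2)))
        = fun m : ℕ => (-1:ℝ)^m * qA q (2*m) / (Nat.factorial (2*m+2) : ℝ) * x^(2*m) := by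
      funext m
      rw [mul_div_cancel_right₀ _ hx2]
    exact heq ▸ h
  have hre_eq : qCos q x = E.re := by
    rw [qCos, Hcos3.tsum_eq]
    field_simp
    ring
  -- imaginary part
  have Him : HasSum (fun n => (((b n : ℝ):ℂ) * (Complex.I * (x:ℂ)) ^ n).im) E.im := by
    simpa using Complex.imCLM.hasSum hbinb
  have Him2 := (hasSum_nat_add_iff'
    (f := fun n => (((b n : ℝ):ℂ) * (Complex.I * (x:ℂ)) ^ n).im) 2).mpr Him
  have hsum2i : ∑ i ∈ Finset.range 2, (((b i : ℝ):ℂ) * (Complex.I * (x:ℂ)) ^ i).im = x := by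
    rw [Finset.sum_range_succ, Finset.sum_range_one]
    simp [hb0, hb1]
  rw [hsum2i] at Him2
  have hinj2' : Function.Injective (fun m : ℕ => 2 * m + 1) := fun m1 m2 h => by
    have h' : 2 * m1 + 1 = 2 * m2 + 1 := h
    omega
  have Him3 : HasSum (fun m => (((b (2*m+1+2) : ℝ):ℂ) * (Complex.I * (x:ℂ)) ^ (2*m+1+2)).im)
      (E.im - x) := by
    refine (Function.Injective.hasSum_iff hinj2' ?_).mpr Him2
    intro n hn
    rcases Nat.even_or_odd n with ⟨m, rfl⟩ | ⟨m, rfl⟩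
    · rw [show m + m + 2 = 2*m+2 by ring, hIeven m, ← Complex.ofReal_mul, Complex.ofReal_im]
    · exact absurd ⟨m, rfl⟩ hn
  have Hsin : HasSum (fun m => ((-1:ℝ)^m * qA q (2*m+1) / (Nat.factorial (2*m+3) : ℝ)
      * x^(2*m+1)) * (-(x^2))) (E.im - x) := by
    have heq : (fun m : ℕ => (((b (2*m+1+2) : ℝ):ℂ) * (Complex.I * (x:ℂ)) ^ (2*m+1+2)).im)
        = fun m : ℕ => ((-1:ℝ)^m * qA q (2*m+1) / (Nat.factorial (2*m+3) : ℝ)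
          * x^(2*m+1)) * (-(x^2)) := by
      funext m
      rw [hb2 (2*m+1), show 2*m+1+2 = 2*m+3 by ring, hIodd m, ← mul_assoc,
        ← Complex.ofReal_mul, Complex.mul_im, Complex.ofReal_re, Complex.ofReal_im,
        Complex.I_re, Complex.I_im]
      ring
    exact heq ▸ Him3
  have Hsin3 : HasSum (fun m => (-1:ℝ)^m * qA q (2*m+1) / (Nat.factorial (2*m+3) : ℝ)
      * x^(2*m+1)) ((E.im - x) / (-(x^2))) := by
    have h := Hsin.div_const (-(x^2))
    have heq : (fun m : ℕ => ((-1:ℝ)^m * qA q (2*m+1) / (Nat.factorial (2*m+3) : ℝ)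
        * x^(2*m+1)) * (-(x^2)) / (-(x^2)))
        = fun m : ℕ => (-1:ℝ)^m * qA q (2*m+1) / (Nat.factorial (2*m+3) : ℝ) * x^(2*m+1) := by
      funext m
      rw [mul_div_cancel_right₀ _ hx2]
    exact heq ▸ h
  have him_eq : qSin q x = E.im := by
    rw [qSin, Hsin3.tsum_eq]
    field_simp
    ring
  refine ⟨?_, hre_eq.symm, him_eq.symm, ?_, ?_⟩
  · rw [hre_eq, him_eq, mul_comm Complex.I]
    exact (Complex.re_add_im E).symm
  · rw [hre_eq, hconj, Complex.add_conj]
    push_cast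
    ring
  · rw [him_eq, hconj, Complex.sub_conj]
    field_simp
    push_cast
    ring
end
end

section
/- Let 1 < q < 2. For all real numbers x, t with x(2−q)t ≠ 0 and all R > 0, the identity (1/R) ∫_{−R}^{R} e_q^{i x ξ t} dξ = 2 sin_{1/(2−q)}(R x (2−q) t) / (R x (2−q) t) holds. -/
open Complex MeasureTheory Filter Topology

noncomputable section

/-- The averaging identity
`(1/R)∫_{-R}^{R} e_q^{ixξt} dξ = 2 sin_{1/(2-q)}(Rx(2-q)t)/(Rx(2-q)t)` for `1 < q < 2`. -/
theorem qExp_average_identity (q : ℝ) (hq1 : 1 < q) (hq2 : q < 2)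
    (x t R : ℝ) (hxt : x * (2 - q) * t ≠ 0) (hR : 0 < R) :
    ((1 / R : ℝ) : ℂ) * ∫ ξ in (-R)..R, qExp q (Complex.I * (x : ℂ) * (ξ : ℂ) * (t : ℂ)) =
      2 * qSinC (1 / (2 - q)) (R * x * (2 - q) * t) / ((R * x * (2 - q) * t : ℝ) : ℂ) := by
  have hx : x ≠ 0 := fun h => hxt (by simp [h])
  have ht : t ≠ 0 := fun h => hxt (by simp [h])
  have h2q : (2 : ℝ) - q ≠ 0 := (by linarith : (0:ℝ) < 2 - q).ne'
  have h1q : (1 : ℝ) - q ≠ 0 := sub_ne_zero.2 (ne_of_lt hq1)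
  have h1qC : (1 : ℂ) - (q : ℂ) ≠ 0 := by exact_mod_cast (Complex.ofReal_ne_zero.2 h1q)
  have h2qC : (2 : ℂ) - (q : ℂ) ≠ 0 := by exact_mod_cast (Complex.ofReal_ne_zero.2 h2q)
  have hxC : (x : ℂ) ≠ 0 := Complex.ofReal_ne_zero.2 hx
  have htC : (t : ℂ) ≠ 0 := Complex.ofReal_ne_zero.2 ht
  have hRC : (R : ℂ) ≠ 0 := Complex.ofReal_ne_zero.2 (ne_of_gt hR)
  set c : ℂ := (1 - (q : ℂ)) * Complex.I * x * t with hc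
  set w : ℂ := ((2 : ℂ) - q) / (1 - q) with hw
  set d : ℂ := ((2 : ℂ) - q) * Complex.I * x * t with hd
  have hdne : d ≠ 0 := by
    rw [hd]
    exact mul_ne_zero (mul_ne_zero (mul_ne_zero h2qC Complex.I_ne_zero) hxC) htC
  have hcmem : ∀ ξ : ℝ, (1 + c * ξ) ∈ Complex.slitPlane := by
    intro ξ
    rw [Complex.mem_slitPlane_iff]
    left
    have : (1 + c * ξ).re = 1 := by
      simp [hc, Complex.add_re, Complex.mul_re, Complex.mul_im]
    rw [this]; norm_num
  have hw1 : w - 1 = 1 / (1 - (q:ℂ)) := by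
    rw [hw]; field_simp; norm_num
  have hwc : w * c = d := by
    rw [hw, hc, hd]; field_simp
  have hderiv : ∀ ξ : ℝ, HasDerivAt (fun s : ℝ => (1 + c * (s : ℂ)) ^ w / d)
      (qExp q (Complex.I * (x : ℂ) * (ξ : ℂ) * (t : ℂ))) ξ := by
    intro ξ
    have hbase : HasDerivAt (fun z : ℂ => 1 + c * z) c (ξ : ℂ) := by
      simpa using ((hasDerivAt_id (ξ : ℂ)).const_mul c).const_add 1
    have h1 : HasDerivAt (fun z : ℂ => (1 + c * z) ^ w)
        (w * (1 + c * (ξ:ℂ)) ^ (w - 1) * c) (ξ : ℂ) :=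
      hbase.cpow_const (hcmem ξ)
    have h2 := (h1.comp_ofReal).div_const d
    convert h2 using 1
    · rfl
    have hbeq : 1 + (1 - (q:ℂ)) * (Complex.I * x * ξ * t) = 1 + c * ξ := by
      rw [hc]; ring
    rw [qExp, hbeq, ← hw1]
    have h3 : w * (1 + c * (ξ:ℂ)) ^ (w - 1) * c = (1 + c * (ξ:ℂ)) ^ (w - 1) * (w * c) := by ring
    rw [h3, hwc, mul_div_assoc, div_self hdne, mul_one]
  have hcont : Continuous fun ξ : ℝ => qExp q (Complex.I * (x : ℂ) * (ξ : ℂ) * (t : ℂ)) := by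
    rw [continuous_iff_continuousAt]
    intro ξ
    have hb : Continuous fun ξ : ℝ => 1 + (1 - (q:ℂ)) * (Complex.I * x * ξ * t) := by
      continuity
    have hmem : (1 + (1 - (q:ℂ)) * (Complex.I * x * ξ * t)) ∈ Complex.slitPlane := by
      have : 1 + (1 - (q:ℂ)) * (Complex.I * x * ξ * t) = 1 + c * ξ := by rw [hc]; ring
      rw [this]; exact hcmem ξ
    simp only [qExp]
    exact ContinuousAt.cpow hb.continuousAt continuousAt_const hmem
  have hint := intervalIntegral.integral_eq_sub_of_hasDerivAt
    (f := fun s : ℝ => (1 + c * (s : ℂ)) ^ w / d)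
    (fun ξ _ => hderiv ξ) (hcont.intervalIntegrable (-R) R)
  rw [hint]
  set s : ℝ := R * x * (2 - q) * t with hs
  have hexp : (1:ℂ) / (1 - ((1 / (2 - q) : ℝ) : ℂ)) = w := by
    rw [hw]; push_cast; field_simp
    rw [show (2:ℂ) - ↑q - 1 = 1 - ↑q from by ring, div_self h1qC]
  have hA : qExp (1 / (2 - q)) (Complex.I * (s:ℂ)) = (1 + c * (R:ℂ)) ^ w := by
    rw [qExp, hexp]
    congr 1
    rw [hc, hs]; push_cast; field_simp; ring
  have hB : qExp (1 / (2 - q)) (-(Complex.I * (s:ℂ))) = (1 + c * ((-R:ℝ):ℂ)) ^ w := by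
    rw [qExp, hexp]
    congr 1
    rw [hc, hs]; push_cast; field_simp; ring
  have hsne : ((s:ℝ):ℂ) ≠ 0 := by
    rw [hs]; push_cast
    exact mul_ne_zero (mul_ne_zero (mul_ne_zero hRC hxC) h2qC) htC
  rw [qSinC, hA, hB]
  have hds : (s:ℂ) * Complex.I = (R:ℂ) * d := by rw [hd, hs]; push_cast; ring
  field_simp
  rw [mul_assoc _ I, mul_comm I, hds]; push_cast; field_simp
end
end

section
/- For real y: (a) if q < 1, then |e_q^{iy}| ≥ 1 and |e_q^{iy}| ~ K_q (1+y²)^{1/(2(1−q))} as y → ∞, where K_q = (1−q)^{1/(1−q)}; (b) if q > 1, then 0 < |e_q^{iy}| ≤ 1 and |e_q^{iy}| → 0 as |y| → ∞. -/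
open Complex MeasureTheory Filter Topology

noncomputable section

lemma abs_qExp_I (q : ℝ) (hq : q ≠ 1) (y : ℝ) :
    ‖qExp q (Complex.I * (y : ℂ))‖ =
      (1 + (1 - q) ^ 2 * y ^ 2) ^ (1 / (2 * (1 - q))) := by
  have hz : (1 + (1 - (q : ℂ)) * (Complex.I * (y : ℂ))) ≠ 0 := by
    intro h
    have : (1 + (1 - (q : ℂ)) * (Complex.I * (y : ℂ))).re = 1 := by simp
    rw [h] at this; simp at this
  have habs : ‖1 + (1 - (q : ℂ)) * (Complex.I * (y : ℂ))‖
      = Real.sqrt (1 + (1 - q) ^ 2 * y ^ 2) := by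
    rw [Complex.norm_def, Complex.normSq_apply]
    simp
    ring_nf
  rw [qExp, Complex.norm_cpow_of_ne_zero hz]
  have h1 : ((1 : ℂ) / (1 - (q : ℂ))).im = 0 := by
    have : ((1 : ℂ) / (1 - (q : ℂ))) = ((1 / (1 - q) : ℝ) : ℂ) := by push_cast; ring
    rw [this, Complex.ofReal_im]
  have h2 : ((1 : ℂ) / (1 - (q : ℂ))).re = 1 / (1 - q) := by
    have : ((1 : ℂ) / (1 - (q : ℂ))) = ((1 / (1 - q) : ℝ) : ℂ) := by push_cast; ring
    rw [this, Complex.ofReal_re]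
  rw [h1, h2, habs, mul_zero, Real.exp_zero, div_one, Real.sqrt_eq_rpow,
    ← Real.rpow_mul (by positivity)]
  have h3 : (1 : ℝ) - q ≠ 0 := sub_ne_zero.2 (Ne.symm hq)
  congr 1
  field_simp

/-- Modulus of `e_q^{iy}`: for `q < 1`, `|e_q^{iy}| ≥ 1` and
`|e_q^{iy}| ~ K_q (1+y²)^{1/(2(1-q))}` as `y → ∞` with `K_q = (1-q)^{1/(1-q)}`;
for `q > 1`, `0 < |e_q^{iy}| ≤ 1` and `|e_q^{iy}| → 0` as `|y| → ∞`. -/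
theorem qExp_modulus (q : ℝ) :
    (q < 1 →
      (∀ y : ℝ, 1 ≤ ‖qExp q (Complex.I * (y : ℂ))‖) ∧
      Tendsto (fun y : ℝ => ‖qExp q (Complex.I * (y : ℂ))‖ /
          ((1 - q) ^ (1 / (1 - q)) * (1 + y ^ 2) ^ (1 / (2 * (1 - q)))))
        atTop (𝓝 1)) ∧
    (1 < q →
      (∀ y : ℝ, 0 < ‖qExp q (Complex.I * (y : ℂ))‖ ∧
        ‖qExp q (Complex.I * (y : ℂ))‖ ≤ 1) ∧
      Tendsto (fun y : ℝ => ‖qExp q (Complex.I * (y : ℂ))‖)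
        (cocompact ℝ) (𝓝 0)) := by
  constructor
  · intro hq
    have hc : (0:ℝ) < 1 - q := by linarith
    have hq' : q ≠ 1 := ne_of_lt hq
    have hc2 : (0:ℝ) < (1 - q)^2 := pow_pos hc 2
    set e : ℝ := 1 / (2 * (1 - q)) with he
    constructor
    · intro y
      rw [abs_qExp_I q hq' y]
      have h1 : (1:ℝ) ≤ 1 + (1-q)^2 * y^2 := by nlinarith [sq_nonneg ((1-q)*y)]
      calc (1:ℝ) = 1 ^ e := (Real.one_rpow e).symm
        _ ≤ (1 + (1-q)^2 * y^2) ^ e := by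
            apply Real.rpow_le_rpow zero_le_one h1 (by positivity)
    · have hKey : ∀ y : ℝ, ‖qExp q (Complex.I * (y : ℂ))‖ /
          ((1 - q) ^ (1 / (1 - q)) * (1 + y ^ 2) ^ e)
          = ((1 + (1-q)^2 * y^2) / ((1-q)^2 * (1 + y^2))) ^ e := by
        intro y
        have hK : (1 - q) ^ (1 / (1 - q)) = ((1-q)^2 : ℝ) ^ e := by
          rw [← Real.rpow_natCast (1-q) 2, ← Real.rpow_mul hc.le]
          congr 1
          have hne : (1:ℝ) - q ≠ 0 := ne_of_gt hc
          rw [he]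
          push_cast
          field_simp
        rw [abs_qExp_I q hq' y, hK,
          Real.div_rpow (by positivity) (by positivity),
          Real.mul_rpow (by positivity) (by positivity)]
      have hinner : Tendsto (fun y : ℝ => (1 + (1-q)^2 * y^2) / ((1-q)^2 * (1 + y^2)))
          atTop (𝓝 1) := by
        have hnum : Tendsto (fun y : ℝ => (y^2)⁻¹ + (1-q)^2) atTop (𝓝 ((1-q)^2)) := by
          have := (tendsto_pow_atTop (two_ne_zero)).inv_tendsto_atTop (α := ℝ)
          simpa using this.add_const ((1-q)^2)
        have hden : Tendsto (fun y : ℝ => (1-q)^2 * ((y^2)⁻¹ + 1)) atTop (𝓝 ((1-q)^2)) := by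
          have := (tendsto_pow_atTop (two_ne_zero)).inv_tendsto_atTop (α := ℝ)
          have h2 := (this.add_const 1).const_mul ((1-q)^2)
          simpa using h2
        have hdiv := hnum.div hden (ne_of_gt hc2)
        rw [div_self (ne_of_gt hc2)] at hdiv
        apply hdiv.congr'
        filter_upwards [eventually_gt_atTop (0:ℝ)] with y hy
        have hy2 : y^2 ≠ 0 := by positivity
        simp only [Pi.div_apply]
        field_simp
      have hcont : Tendsto (fun t : ℝ => t ^ e) (𝓝 1) (𝓝 1) := by
        have := (Real.continuousAt_rpow_const 1 e (Or.inl one_ne_zero)).tendsto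
        simpa using this
      have := hcont.comp hinner
      refine Tendsto.congr (fun y => (hKey y).symm) this
  · intro hq
    have hc : (1:ℝ) - q < 0 := by linarith
    have hq' : q ≠ 1 := ne_of_gt hq
    have hc2 : (0:ℝ) < (1 - q)^2 := by nlinarith
    set e : ℝ := 1 / (2 * (1 - q)) with he
    have hee : e < 0 := by
      apply div_neg_of_pos_of_neg one_pos
      linarith
    constructor
    · intro y
      rw [abs_qExp_I q hq' y]
      have h1 : (1:ℝ) ≤ 1 + (1-q)^2 * y^2 := by nlinarith [sq_nonneg ((1-q)*y)]
      constructor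
      · exact Real.rpow_pos_of_pos (by linarith) e
      · exact Real.rpow_le_one_of_one_le_of_nonpos h1 hee.le
    · have hTop : Tendsto (fun y : ℝ => 1 + (1-q)^2 * y^2) (cocompact ℝ) atTop := by
        have h1 : Tendsto (fun y : ℝ => ‖y‖^2) (cocompact ℝ) atTop :=
          (tendsto_pow_atTop (two_ne_zero)).comp tendsto_norm_cocompact_atTop
        have h2 : Tendsto (fun y : ℝ => y^2) (cocompact ℝ) atTop := by
          refine h1.congr fun y => ?_
          simp [sq_abs]
        have h3 := h2.const_mul_atTop hc2
        exact tendsto_atTop_add_const_left _ 1 h3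
      have hrpow : Tendsto (fun x : ℝ => x ^ e) atTop (𝓝 0) := by
        have := tendsto_rpow_neg_atTop (show (0:ℝ) < -e by linarith)
        simpa using this
      have := hrpow.comp hTop
      refine Tendsto.congr (fun y => ?_) this
      rw [abs_qExp_I q hq' y]
      rfl
end
end

section
/- Let q > 1 and x > (q−1)^{−1}. Then the q-exponential admits the convergent representation e_q^{−x} = [(q−1)x]^{−1/(q−1)} ( 1 − 1/((1−q)² x) + (1/((1−q)⁴ x²)) Σ_{n=0}^∞ ((−1)^n A_n(q)/((n+2)!(q−1)^{2n})) (1/x)ⁿ ). -/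
open Complex MeasureTheory Filter Topology

noncomputable section

namespace QExpAux

/-- Generalized binomial coefficient `a(a-1)⋯(a-m+1)/m!`. -/
def bc (a : ℝ) (m : ℕ) : ℝ := (∏ k ∈ Finset.range m, (a - k)) / (Nat.factorial m : ℝ)

lemma bc_zero (a : ℝ) : bc a 0 = 1 := by simp [bc]

lemma bc_succ (a : ℝ) (m : ℕ) : bc a (m + 1) * (m + 1) = bc a m * (a - m) := by
  have hm : (Nat.factorial m : ℝ) ≠ 0 := Nat.cast_ne_zero.2 m.factorial_ne_zero
  rw [bc, bc, Finset.prod_range_succ, Nat.factorial_succ]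
  push_cast
  field_simp

lemma bc_ne_zero (a : ℝ) (ha : a < 0) (m : ℕ) : bc a m ≠ 0 := by
  have : (∏ k ∈ Finset.range m, (a - k)) ≠ 0 := by
    apply Finset.prod_ne_zero_iff.2
    intro k _
    have : a - k < 0 := by
      have : (0:ℝ) ≤ k := Nat.cast_nonneg k
      linarith
    exact ne_of_lt this
  exact div_ne_zero this (Nat.cast_ne_zero.2 m.factorial_ne_zero)

lemma abs_bc_succ (a : ℝ) (m : ℕ) :
    |bc a (m + 1)| = |bc a m| * |a - m| / (m + 1) := by
  have h : bc a (m + 1) = bc a m * (a - m) / (m + 1) := by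
    have h1 : ((m : ℝ) + 1) ≠ 0 := by positivity
    field_simp
    linarith [bc_succ a m]
  rw [h, _root_.abs_div, _root_.abs_mul]
  congr 1
  rw [_root_.abs_of_pos]; positivity

lemma summable_bc_pow (a : ℝ) (ha : a < 0) {y : ℝ} (hy : |y| < 1) :
    Summable (fun m : ℕ => bc a m * y ^ m) := by
  rcases eq_or_ne y 0 with rfl | hy0
  · apply summable_of_ne_finset_zero (s := {0})
    intro m hm
    simp only [Finset.mem_singleton] at hm
    rw [zero_pow hm, mul_zero]
  · apply summable_of_ratio_test_tendsto_lt_one hy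
    · exact Eventually.of_forall fun m =>
        mul_ne_zero (bc_ne_zero a ha m) (pow_ne_zero m hy0)
    · have key : ∀ m : ℕ, ‖bc a (m+1) * y ^ (m+1)‖ / ‖bc a m * y ^ m‖
          = |y| - (a + 1) * |y| / ((m : ℝ) + 1) := by
        intro m
        have hbc : bc a m ≠ 0 := bc_ne_zero a ha m
        have hm1 : ((m : ℝ) + 1) ≠ 0 := by positivity
        rw [Real.norm_eq_abs, Real.norm_eq_abs, _root_.abs_mul, _root_.abs_mul, _root_.abs_pow, _root_.abs_pow,
          abs_bc_succ, pow_succ]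
        have haM : |a - (m:ℝ)| = (m : ℝ) - a := by
          rw [_root_.abs_of_nonpos (by
            have : (0:ℝ) ≤ (m:ℝ) := Nat.cast_nonneg m
            linarith)]
          ring
        rw [haM]
        have hb : |bc a m| ≠ 0 := _root_.abs_ne_zero.2 hbc
        have hyp : |y| ^ m ≠ 0 := pow_ne_zero m (_root_.abs_ne_zero.2 hy0)
        field_simp
        ring
      rw [show (fun n : ℕ => ‖bc a (n+1) * y ^ (n+1)‖ / ‖bc a n * y ^ n‖)
          = fun n : ℕ => |y| - (a + 1) * |y| / ((n : ℝ) + 1) from funext key]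
      have h0 : Tendsto (fun n : ℕ => ((a + 1) * |y|) / ((n : ℝ) + 1)) atTop (𝓝 0) := by
        have := (tendsto_const_div_atTop_nhds_zero_nat ((a + 1) * |y|)).comp
          (tendsto_add_atTop_nat 1)
        refine this.congr fun n => ?_
        simp [Function.comp]
      simpa using tendsto_const_nhds.sub h0


lemma summable_deriv_bound (a : ℝ) (ha : a < 0) {r : ℝ} (hr0 : 0 < r) (hr1 : r < 1) :
    Summable (fun m : ℕ => |bc a m| * ((m : ℝ) * r ^ (m - 1))) := by
  apply summable_of_ratio_test_tendsto_lt_one hr1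
  · filter_upwards [eventually_ge_atTop 1] with m hm
    have h1 : (0:ℝ) < (m:ℝ) := by exact_mod_cast hm
    have := bc_ne_zero a ha m
    positivity
  · apply Tendsto.congr' (f₁ := fun m : ℕ => r - a * r / (m : ℝ))
    · filter_upwards [eventually_ge_atTop 1] with m hm
      obtain ⟨k, rfl⟩ := Nat.exists_eq_add_of_le hm
      set m := 1 + k with hmdef
      have hm0 : (0:ℝ) < (m:ℝ) := by positivity
      have hbc : |bc a m| ≠ 0 := _root_.abs_ne_zero.2 (bc_ne_zero a ha m)
      have hrm : r ^ (m - 1) ≠ 0 := pow_ne_zero _ (ne_of_gt hr0)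
      have hsub : m + 1 - 1 = (m - 1) + 1 := by omega
      have haM : |a - (m:ℝ)| = (m : ℝ) - a := by
        rw [_root_.abs_of_nonpos (by linarith [Nat.cast_nonneg (α := ℝ) m])]; ring
      simp only [Real.norm_eq_abs, _root_.abs_mul, _root_.abs_abs, _root_.abs_pow, Nat.abs_cast,
        _root_.abs_of_pos hr0]
      rw [abs_bc_succ, haM, hsub, pow_succ]
      push_cast
      field_simp
    · have h0 : Tendsto (fun m : ℕ => a * r / (m : ℝ)) atTop (𝓝 0) :=
        tendsto_const_div_atTop_nhds_zero_nat (a * r)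
      simpa using tendsto_const_nhds.sub h0


lemma binomial_hasSum (a : ℝ) (ha : a < 0) {t : ℝ} (ht0 : 0 ≤ t) (ht1 : t < 1) :
    HasSum (fun m : ℕ => bc a m * t ^ m) ((1 + t) ^ a) := by
  set r : ℝ := (t + 1) / 2 with hrdef
  have hr0 : 0 < r := by positivity
  have hr1 : r < 1 := by rw [hrdef]; linarith
  have htr : t < r := by rw [hrdef]; linarith
  have h0s : (0:ℝ) ∈ Set.Ioo (-r) r := ⟨by linarith, hr0⟩
  have hsum0 : Summable (fun m : ℕ => bc a m * (0:ℝ) ^ m) :=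
    summable_bc_pow a ha (by simp)
  have hbound : ∀ (m : ℕ), ∀ z ∈ Set.Ioo (-r) r,
      ‖bc a m * ((m : ℝ) * z ^ (m - 1))‖ ≤ |bc a m| * ((m : ℝ) * r ^ (m - 1)) := by
    intro m z hz
    have hza : |z| ≤ r := le_of_lt (_root_.abs_lt.2 ⟨hz.1, hz.2⟩)
    rw [Real.norm_eq_abs, _root_.abs_mul, _root_.abs_mul, Nat.abs_cast, _root_.abs_pow]
    gcongr
  have hders : ∀ y ∈ Set.Ioo (-r) r,
      HasDerivAt (fun z : ℝ => ∑' m : ℕ, bc a m * z ^ m)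
        (∑' m : ℕ, bc a m * ((m : ℝ) * y ^ (m - 1))) y := by
    intro y hy
    exact hasDerivAt_tsum_of_isPreconnected (summable_deriv_bound a ha hr0 hr1)
      isOpen_Ioo (convex_Ioo _ _).isPreconnected
      (fun m z _ => (hasDerivAt_pow m z).const_mul (bc a m))
      hbound h0s hsum0 hy
  have hkey : ∀ y ∈ Set.Ioo (-r) r,
      (1 + y) * (∑' m : ℕ, bc a m * ((m : ℝ) * y ^ (m - 1)))
        = a * ∑' m : ℕ, bc a m * y ^ m := by
    intro y hy
    have hSsum : Summable (fun m : ℕ => bc a m * ((m : ℝ) * y ^ (m - 1))) :=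
      Summable.of_norm_bounded (summable_deriv_bound a ha hr0 hr1)
        (fun m => hbound m y hy)
    have hsum1 : Summable (fun m : ℕ => bc a m * y ^ m) := by
      apply summable_bc_pow a ha
      exact lt_trans (_root_.abs_lt.2 ⟨hy.1, hy.2⟩) hr1
    have hterm1 : ∀ m : ℕ, bc a (m + 1) * (((m : ℕ) + 1 : ℝ) * y ^ (m + 1 - 1))
        = (a - m) * (bc a m * y ^ m) := by
      intro m
      have h := bc_succ a m
      simp only [Nat.add_sub_cancel]
      calc bc a (m + 1) * (((m : ℝ) + 1) * y ^ m)
          = (bc a (m + 1) * ((m : ℝ) + 1)) * y ^ m := by ring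
        _ = (bc a m * (a - m)) * y ^ m := by rw [h]
        _ = (a - m) * (bc a m * y ^ m) := by ring
    have hshift : (∑' m : ℕ, bc a m * ((m : ℝ) * y ^ (m - 1)))
        = ∑' m : ℕ, (a - m) * (bc a m * y ^ m) := by
      rw [Summable.tsum_eq_zero_add hSsum]
      simp only [Nat.cast_zero, zero_mul, mul_zero, zero_add, Nat.cast_add, Nat.cast_one]
      exact tsum_congr fun m => hterm1 m
    have hsumA : Summable (fun m : ℕ => (a - m) * (bc a m * y ^ m)) := by
      refine Summable.congr ((summable_nat_add_iff 1).2 hSsum) fun m => ?_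
      push_cast
      exact hterm1 m
    have hsumB : Summable (fun m : ℕ => (m : ℝ) * (bc a m * y ^ m)) := by
      refine Summable.congr (hSsum.mul_left y) fun m => ?_
      cases m with
      | zero => simp
      | succ k => simp only [Nat.add_sub_cancel]; rw [pow_succ]; push_cast; ring
    have hymul : y * (∑' m : ℕ, bc a m * ((m : ℝ) * y ^ (m - 1)))
        = ∑' m : ℕ, (m : ℝ) * (bc a m * y ^ m) := by
      rw [← tsum_mul_left]
      refine tsum_congr fun m => ?_
      cases m with
      | zero => simp
      | succ k => simp only [Nat.add_sub_cancel]; rw [pow_succ]; push_cast; ring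
    calc (1 + y) * (∑' m : ℕ, bc a m * ((m : ℝ) * y ^ (m - 1)))
        = (∑' m : ℕ, bc a m * ((m : ℝ) * y ^ (m - 1)))
          + y * (∑' m : ℕ, bc a m * ((m : ℝ) * y ^ (m - 1))) := by ring
      _ = (∑' m : ℕ, (a - m) * (bc a m * y ^ m))
          + ∑' m : ℕ, (m : ℝ) * (bc a m * y ^ m) := by rw [hymul, hshift]
      _ = ∑' m : ℕ, ((a - m) * (bc a m * y ^ m) + (m : ℝ) * (bc a m * y ^ m)) :=
          (Summable.tsum_add hsumA hsumB).symm
      _ = ∑' m : ℕ, a * (bc a m * y ^ m) := tsum_congr fun m => by ring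
      _ = a * ∑' m : ℕ, bc a m * y ^ m := tsum_mul_left
  -- the function G y = F y * (1+y)^(-a) is constant on [0, t]
  have hIccs : Set.Icc (0:ℝ) t ⊆ Set.Ioo (-r) r := fun y hy =>
    ⟨by linarith [hy.1], by linarith [hy.2]⟩
  have hGd : ∀ y ∈ Set.Icc (0:ℝ) t,
      HasDerivAt (fun z : ℝ => (∑' m : ℕ, bc a m * z ^ m) * (1 + z) ^ (-a)) 0 y := by
    intro y hy
    have hy' : y ∈ Set.Ioo (-r) r := hIccs hy
    have h1y : (0:ℝ) < 1 + y := by linarith [hy'.1, hr1]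
    have hc : HasDerivAt (fun z : ℝ => 1 + z) 1 y := (hasDerivAt_id y).const_add 1
    have hrp : HasDerivAt (fun z : ℝ => (1 + z) ^ (-a)) (-a * (1 + y) ^ (-a - 1)) y := by
      have h := (Real.hasDerivAt_rpow_const (x := 1 + y) (p := -a) (Or.inl h1y.ne')).comp y hc
      simpa [Function.comp_def] using h
    have hprod := (hders y hy').mul hrp
    have hval : (∑' m : ℕ, bc a m * ((m : ℝ) * y ^ (m - 1))) * (1 + y) ^ (-a)
        + (∑' m : ℕ, bc a m * y ^ m) * (-a * (1 + y) ^ (-a - 1)) = 0 := by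
      have hsplit := (Real.rpow_add h1y 1 (-a - 1)).symm
      rw [Real.rpow_one, show (1 : ℝ) + (-a - 1) = -a by ring] at hsplit
      rw [← hsplit]
      linear_combination ((1 + y) ^ (-a - 1)) * hkey y hy'
    rw [← hval]
    exact hprod
  have hconst := constant_of_has_deriv_right_zero
    (f := fun z : ℝ => (∑' m : ℕ, bc a m * z ^ m) * (1 + z) ^ (-a))
    (fun y hy => ((hGd y hy).continuousAt).continuousWithinAt)
    (fun y hy => (hGd y (Set.mem_Icc_of_Ico hy)).hasDerivWithinAt)
    t (Set.right_mem_Icc.2 ht0)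
  have hF0 : (∑' m : ℕ, bc a m * (0:ℝ) ^ m) = 1 := by
    rw [tsum_eq_single 0 (fun m hm => by simp [zero_pow hm])]
    simp [bc_zero]
  have hconst' : (∑' m : ℕ, bc a m * t ^ m) * (1 + t) ^ (-a) = 1 := by
    simpa [hF0] using hconst
  have hpos : (0:ℝ) < 1 + t := by linarith
  have hFt : (∑' m : ℕ, bc a m * t ^ m) = (1 + t) ^ a := by
    rw [Real.rpow_neg hpos.le, mul_inv_eq_one₀ (Real.rpow_pos_of_pos hpos a).ne'] at hconst'
    exact hconst'
  have hsumt : Summable (fun m : ℕ => bc a m * t ^ m) :=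
    summable_bc_pow a ha (by rwa [_root_.abs_of_nonneg ht0])
  exact hFt ▸ hsumt.hasSum

end QExpAux

/-- Convergent representation of `e_q^{-x}` for `q > 1` and `x > (q-1)⁻¹`. -/
theorem qExp_neg_representation (q x : ℝ) (hq : 1 < q) (hx : (q - 1)⁻¹ < x) :
    qExpR q (-x) = ((q - 1) * x) ^ (-(1 / (q - 1))) *
      (1 - 1 / ((1 - q) ^ 2 * x) + 1 / ((1 - q) ^ 4 * x ^ 2) *
        ∑' n : ℕ, (-1 : ℝ) ^ n * qA q n /
          ((Nat.factorial (n + 2) : ℝ) * (q - 1) ^ (2 * n)) * (1 / x) ^ n) := by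
  have hq1 : (0:ℝ) < q - 1 := by linarith
  have hq1' : (q:ℝ) - 1 ≠ 0 := hq1.ne'
  have h1q : (1:ℝ) - q ≠ 0 := by intro h; apply hq1'; linarith
  have hx0 : (0:ℝ) < x := lt_trans (by positivity) hx
  set a : ℝ := 1 / (1 - q) with hadef
  have ha : a < 0 := by
    rw [hadef]
    apply div_neg_of_pos_of_neg one_pos
    linarith
  set t : ℝ := ((q - 1) * x)⁻¹ with htdef
  have hqx : (0:ℝ) < (q - 1) * x := by positivity
  have ht0 : (0:ℝ) < t := by rw [htdef]; positivity
  have honelt : (1:ℝ) < (q - 1) * x := by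
    calc (1:ℝ) = (q - 1) * (q - 1)⁻¹ := (mul_inv_cancel₀ hq1').symm
    _ < (q - 1) * x := by exact mul_lt_mul_of_pos_left hx hq1
  have ht1 : t < 1 := by
    rw [htdef]
    exact inv_lt_one_of_one_lt₀ honelt
  have hS := QExpAux.binomial_hasSum a ha ht0.le ht1
  set f : ℕ → ℝ := fun m => QExpAux.bc a m * t ^ m with hfdef
  have hf0 : f 0 = 1 := by simp [hfdef, QExpAux.bc_zero]
  have hf1 : f 1 = -(1 / ((1 - q) ^ 2 * x)) := by
    simp only [hfdef, QExpAux.bc, Finset.prod_range_one, Nat.factorial_one, pow_one,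
      Nat.cast_zero, Nat.cast_one, sub_zero, htdef, hadef]
    rw [mul_inv]
    field_simp
    ring
  have h2 : HasSum (fun n => f (n + 2)) ((1 + t) ^ a - ∑ i ∈ Finset.range 2, f i) :=
    (hasSum_nat_add_iff (f := f) 2).mpr (by
      rw [sub_add_cancel]
      exact hS)
  -- the coefficient computation
  have hprod : ∀ n : ℕ, ∏ k ∈ Finset.range (n + 2), (a - (k : ℝ))
      = qA q n * (-(q - 1)⁻¹) ^ (n + 2) := by
    intro n
    rw [Finset.prod_range_succ']
    have hcongr : ∀ k ∈ Finset.range (n + 1),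
        (a - ((k + 1 : ℕ) : ℝ)) = (q - (k:ℝ) * (1 - q)) * (-(q - 1)⁻¹) := by
      intro k _
      rw [hadef]
      push_cast
      field_simp
      ring
    rw [Finset.prod_congr rfl hcongr, Finset.prod_mul_distrib, Finset.prod_const, qA]
    have h0 : a - ((0:ℕ):ℝ) = -(q - 1)⁻¹ := by
      rw [hadef]
      push_cast
      field_simp
      ring
    rw [h0, Finset.card_range, pow_succ]
    ring
  set K : ℝ := 1 / ((1 - q) ^ 4 * x ^ 2) with hKdef
  set d : ℕ → ℝ := fun n => (-1 : ℝ) ^ n * qA q n /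
      ((Nat.factorial (n + 2) : ℝ) * (q - 1) ^ (2 * n)) * (1 / x) ^ n with hddef
  have hterm : ∀ n : ℕ, f (n + 2) = K * d n := by
    intro n
    have hfact : ((Nat.factorial (n + 2) : ℝ)) ≠ 0 :=
      Nat.cast_ne_zero.2 (Nat.factorial_ne_zero _)
    have e1 : (q - 1) ^ (2 * n) = (q - 1) ^ n * (q - 1) ^ n := by
      rw [two_mul, pow_add]
    have e2 : ∀ b : ℝ, b ^ (n + 2) = b ^ n * b ^ 2 := fun b => pow_add b n 2
    have hneg : (-(q - 1)⁻¹ : ℝ) ^ (n + 2) = (-1 : ℝ) ^ n * ((q - 1) ^ (n + 2))⁻¹ := by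
      rw [neg_pow, inv_pow, pow_add]
      norm_num
    simp only [hfdef, QExpAux.bc, hprod n, hddef, hKdef, htdef]
    rw [hneg, mul_inv, mul_pow, inv_pow, inv_pow, e1, e2, e2]
    have h4 : ((1:ℝ) - q) ^ 4 = (q - 1) ^ 4 := by ring
    rw [h4]
    field_simp
    ring_nf
    rw [mul_assoc, ← mul_pow, mul_inv_cancel₀ hx0.ne', one_pow, mul_one]
  have hK0 : K ≠ 0 := by
    rw [hKdef]
    have h4 : ((1:ℝ) - q) ^ 4 ≠ 0 := pow_ne_zero _ h1q
    exact one_div_ne_zero (mul_ne_zero h4 (pow_ne_zero _ hx0.ne'))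
  have h2' : HasSum (fun n => K * d n) ((1 + t) ^ a - ∑ i ∈ Finset.range 2, f i) := by
    refine h2.congr_fun fun n => (hterm n).symm
  have hd : HasSum d (K⁻¹ * ((1 + t) ^ a - ∑ i ∈ Finset.range 2, f i)) := by
    have h3 := h2'.mul_left K⁻¹
    refine h3.congr_fun fun n => ?_
    rw [← mul_assoc, inv_mul_cancel₀ hK0, one_mul]
  have htsum : ∑' n, d n = K⁻¹ * ((1 + t) ^ a - ∑ i ∈ Finset.range 2, f i) := hd.tsum_eq
  have hsum2 : ∑ i ∈ Finset.range 2, f i = 1 + -(1 / ((1 - q) ^ 2 * x)) := by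
    rw [Finset.sum_range_succ, Finset.sum_range_one, hf0, hf1]
  -- final assembly
  have hinner : 1 - 1 / ((1 - q) ^ 2 * x) + K * (∑' n, d n) = (1 + t) ^ a := by
    rw [htsum, ← mul_assoc, mul_inv_cancel₀ hK0, one_mul, hsum2]
    ring
  have hmax : qExpR q (-x) = (1 + (q - 1) * x) ^ a := by
    rw [qExpR, show 1 + (1 - q) * (-x) = 1 + (q - 1) * x by ring,
      max_eq_left (by positivity), hadef]
  have hfactor : 1 + (q - 1) * x = ((q - 1) * x) * (1 + t) := by
    rw [htdef]
    field_simp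
    ring
  have hexp : -(1 / (q - 1)) = a := by
    rw [hadef, one_div, one_div, show (1:ℝ) - q = -(q - 1) by ring, inv_neg]
  rw [hmax, hfactor, Real.mul_rpow hqx.le (by positivity : (0:ℝ) ≤ 1 + t), hexp, hinner]
end
end

section
/- Let 1 ≤ q < 2, let f be a probability density on ℝ, and let a > 0. If X is a random variable with density f, then the random variable aX (whose density is x ↦ (1/a) f(x/a)) satisfies F_q[aX](ξ) = F_q[X](a^{2−q} ξ) for every ξ; that is, F_q[(1/a) f(·/a)](ξ) = F_q[f](a^{2−q} ξ). -/
open Complex MeasureTheory Filter Topology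

noncomputable section

/-- Scaling property of the `q`-Fourier transform: `F_q[aX](ξ) = F_q[X](a^{2-q}ξ)`,
i.e. `F_q[(1/a) f(·/a)](ξ) = F_q[f](a^{2-q} ξ)` for `a > 0`. -/
theorem qFourier_scaling (q : ℝ) (hq1 : 1 ≤ q) (hq2 : q < 2)
    (f : ℝ → ℝ) (hf_nn : ∀ x, 0 ≤ f x) (hf_int : Integrable f)
    (hf_one : ∫ x : ℝ, f x = 1) (a : ℝ) (ha : 0 < a) (ξ : ℝ) :
    qFourier q (fun x => (1 / a) * f (x / a)) ξ = qFourier q f (a ^ (2 - q) * ξ) := by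
  have ha' : a ≠ 0 := ha.ne'
  set ξ' : ℝ := a ^ (2 - q) * ξ with hξ'
  set G : ℝ → ℂ := fun y =>
    (f y : ℂ) * qExp q (Complex.I * (y : ℂ) * (ξ' : ℂ) * ((f y ^ (q - 1) : ℝ) : ℂ)) with hG
  have h1 : (1 / a) ^ (q - 1) = a ^ (1 - q) := by
    rw [one_div, Real.inv_rpow ha.le, ← Real.rpow_neg ha.le, neg_sub]
  have h2 : a ^ (2 - q) = a * a ^ (1 - q) := by
    have h : (2 - q) = 1 + (1 - q) := by ring
    rw [h, Real.rpow_add ha, Real.rpow_one]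
  have key : ∀ x : ℝ,
      ((((1 : ℝ) / a) * f (x / a) : ℝ) : ℂ) *
        qExp q (Complex.I * (x : ℂ) * (ξ : ℂ) *
          (((((1 : ℝ) / a) * f (x / a)) ^ (q - 1) : ℝ) : ℂ))
      = ((1 : ℝ) / a) • G (x / a) := by
    intro x
    have hpow : (((1 : ℝ) / a) * f (x / a)) ^ (q - 1)
        = a ^ (1 - q) * f (x / a) ^ (q - 1) := by
      rw [Real.mul_rpow (by positivity) (hf_nn _), h1]
    have harg : (x : ℝ) * ξ * (a ^ (1 - q) * f (x / a) ^ (q - 1))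
        = (x / a) * ξ' * f (x / a) ^ (q - 1) := by
      rw [hξ', h2]; field_simp
    have harg' : Complex.I * (x : ℂ) * (ξ : ℂ) *
          ((a ^ (1 - q) * f (x / a) ^ (q - 1) : ℝ) : ℂ)
        = Complex.I * ((x / a : ℝ) : ℂ) * (ξ' : ℂ) * ((f (x / a) ^ (q - 1) : ℝ) : ℂ) := by
      have := congrArg (fun t : ℝ => Complex.I * (t : ℂ)) harg
      push_cast at this ⊢
      ring_nf at this ⊢
      exact this
    rw [hpow, harg', hG]
    simp only [real_smul]
    push_cast
    ring
  calc qFourier q (fun x => (1 / a) * f (x / a)) ξ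
      = ∫ x : ℝ, ((1 : ℝ) / a) • G (x / a) := by
        unfold qFourier
        exact integral_congr_ae (Filter.Eventually.of_forall fun x => key x)
    _ = ((1 : ℝ) / a) • ∫ x : ℝ, G (x / a) := integral_smul _ _
    _ = ((1 : ℝ) / a) • (|a| • ∫ y : ℝ, G y) := by
        rw [MeasureTheory.Measure.integral_comp_div G a]
    _ = qFourier q f ξ' := by
        rw [abs_of_pos ha, smul_smul]
        rw [one_div_mul_cancel ha', one_smul]
        rfl
end
end
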